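/- arXiv:1008.3942 — 3 statements merged into one kernel-verified Lean document; each statement's English description precedes it below -/
import Mathlib

section
/- Assume Krasikov's bound: for nonnegative integers n, α and x with q² < x < s², |L_n^{(α)}(x)| < √((n+α)!/n!) · √(x(s²−q²)/r(x)) · e^{x/2} x^{−(α+1)/2}, where s = √(n+α+1) + √n, q = √(n+α+1) − √n, r(x) = (x−q²)(s²−x). Then for integers 1 ≤ m ≤ N−1, |A_m| < √(4√(Nm)/(4Nm − m²)) ≤ C N^{−1/4} m^{−1/4} for some absolute constant C, where A_m = e^{−N/2} N^{(N−m−1)/2} √(m!/(N−1)!) L_m^{(N−m−1)}(N). -/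
open scoped Nat
open Finset

/-- The associated Laguerre polynomial `L_n^{(α)}(x)`. -/
noncomputable def assocLaguerre (n α : ℕ) (x : ℝ) : ℝ :=
  ∑ k ∈ range (n + 1),
    (-1 : ℝ) ^ k * (((n + α)! : ℝ) / ((k ! : ℝ) * ((n - k)! : ℝ) * ((α + k)! : ℝ))) * x ^ k

set_option maxHeartbeats 2000000 in
/-- Assume Krasikov's bound: for nonnegative integers `n, α` and real `x` with
`q² < x < s²`,
`|L_n^{(α)}(x)| < √((n+α)!/n!) · √(x(s²−q²)/r(x)) · e^{x/2} x^{−(α+1)/2}`,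
where `s = √(n+α+1) + √n`, `q = √(n+α+1) − √n`, `r(x) = (x−q²)(s²−x)`.
Then for integers `1 ≤ m ≤ N−1`,
`|A_m| < √(4√(Nm)/(4Nm − m²)) ≤ C N^{−1/4} m^{−1/4}` for some absolute constant `C`, where
`A_m = e^{−N/2} N^{(N−m−1)/2} √(m!/(N−1)!) L_m^{(N−m−1)}(N)`. -/
theorem A_m_bound
    (hK : ∀ (n α : ℕ) (x : ℝ),
      (Real.sqrt ((n : ℝ) + α + 1) - Real.sqrt n) ^ 2 < x →
      x < (Real.sqrt ((n : ℝ) + α + 1) + Real.sqrt n) ^ 2 →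
      |assocLaguerre n α x|
        < Real.sqrt (((n + α)! : ℝ) / (n ! : ℝ))
          * Real.sqrt (x * ((Real.sqrt ((n : ℝ) + α + 1) + Real.sqrt n) ^ 2
                              - (Real.sqrt ((n : ℝ) + α + 1) - Real.sqrt n) ^ 2)
              / ((x - (Real.sqrt ((n : ℝ) + α + 1) - Real.sqrt n) ^ 2)
                  * ((Real.sqrt ((n : ℝ) + α + 1) + Real.sqrt n) ^ 2 - x)))
          * Real.exp (x / 2) * x ^ (-((α : ℝ) + 1) / 2)) :
    ∃ C : ℝ, 0 < C ∧ ∀ N m : ℕ, 2 ≤ N → 1 ≤ m → m ≤ N - 1 →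
      |Real.exp (-(N : ℝ) / 2) * (N : ℝ) ^ (((N : ℝ) - m - 1) / 2)
          * Real.sqrt ((m ! : ℝ) / ((N - 1)! : ℝ)) * assocLaguerre m (N - m - 1) N|
        < Real.sqrt (4 * Real.sqrt ((N : ℝ) * m) / (4 * (N : ℝ) * m - (m : ℝ) ^ 2)) ∧
      Real.sqrt (4 * Real.sqrt ((N : ℝ) * m) / (4 * (N : ℝ) * m - (m : ℝ) ^ 2))
        ≤ C * (N : ℝ) ^ (-(1 : ℝ) / 4) * (m : ℝ) ^ (-(1 : ℝ) / 4) := by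
  refine ⟨2 / Real.sqrt 3, by positivity, ?_⟩
  intro N m hN hm hmN
  have hmN' : m + 1 ≤ N := by omega
  set α := N - m - 1 with hαdef
  have hNpos : (0:ℝ) < N := by exact_mod_cast (by omega : 0 < N)
  have hmpos : (0:ℝ) < m := by exact_mod_cast hm
  have hmleN : (m:ℝ) ≤ N := by exact_mod_cast (by omega : m ≤ N)
  have hαr : (α : ℝ) = (N:ℝ) - m - 1 := by
    have h : α + (m + 1) = N := by omega
    have h2 := congrArg (fun k : ℕ => (k:ℝ)) h
    push_cast at h2
    linarith
  have hcast : (m:ℝ) + α + 1 = N := by rw [hαr]; ring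
  have hfact : m + α = N - 1 := by omega
  have hu2 : Real.sqrt ((N:ℝ) * m) ^ 2 = (N:ℝ) * m := Real.sq_sqrt (by positivity)
  have hupos : 0 < Real.sqrt ((N:ℝ) * m) := Real.sqrt_pos.2 (by positivity)
  have hsN2 : Real.sqrt (N:ℝ) ^ 2 = N := Real.sq_sqrt hNpos.le
  have hsm2 : Real.sqrt (m:ℝ) ^ 2 = m := Real.sq_sqrt hmpos.le
  have hprod : Real.sqrt (N:ℝ) * Real.sqrt (m:ℝ) = Real.sqrt ((N:ℝ) * m) :=
    (Real.sqrt_mul hNpos.le _).symm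
  have hmu : (m:ℝ) ≤ Real.sqrt ((N:ℝ) * m) := by
    have h1 : Real.sqrt (m:ℝ) ≤ Real.sqrt (N:ℝ) := Real.sqrt_le_sqrt hmleN
    nlinarith [Real.sqrt_nonneg (m:ℝ)]
  have h1 : (Real.sqrt (N:ℝ) - Real.sqrt (m:ℝ))^2 = (N:ℝ) + m - 2*Real.sqrt ((N:ℝ)*m) := by
    linear_combination hsN2 + hsm2 - 2*hprod
  have h2 : (Real.sqrt (N:ℝ) + Real.sqrt (m:ℝ))^2 = (N:ℝ) + m + 2*Real.sqrt ((N:ℝ)*m) := by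
    linear_combination hsN2 + hsm2 + 2*hprod
  have hq : (Real.sqrt ((m:ℝ) + α + 1) - Real.sqrt m)^2 < (N:ℝ) := by
    rw [hcast, h1]; nlinarith
  have hs : (N:ℝ) < (Real.sqrt ((m:ℝ) + α + 1) + Real.sqrt m)^2 := by
    rw [hcast, h2]; nlinarith
  have hL := hK m α (N:ℝ) hq hs
  rw [hcast, hfact] at hL
  have hfm : (0:ℝ) < (m ! : ℝ) := by exact_mod_cast m.factorial_pos
  have hfN : (0:ℝ) < ((N - 1)! : ℝ) := by exact_mod_cast (N-1).factorial_pos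
  have hP : 0 < Real.exp (-(N : ℝ) / 2) * (N : ℝ) ^ (((N : ℝ) - m - 1) / 2)
      * Real.sqrt ((m ! : ℝ) / ((N - 1)! : ℝ)) :=
    mul_pos (mul_pos (Real.exp_pos _) (Real.rpow_pos_of_pos hNpos _))
      (Real.sqrt_pos.2 (by positivity))
  have eX : (Real.sqrt (N:ℝ) + Real.sqrt (m:ℝ))^2 - (Real.sqrt (N:ℝ) - Real.sqrt (m:ℝ))^2
      = 4 * Real.sqrt ((N:ℝ) * m) := by linear_combination 4*hprod
  have er : ((N:ℝ) - (Real.sqrt (N:ℝ) - Real.sqrt (m:ℝ))^2)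
      * ((Real.sqrt (N:ℝ) + Real.sqrt (m:ℝ))^2 - (N:ℝ)) = 4 * (N:ℝ) * m - (m:ℝ)^2 := by
    rw [h1, h2]; linear_combination 4*hu2
  constructor
  · have eexp : Real.exp (-(N:ℝ)/2) * Real.exp ((N:ℝ)/2) = 1 := by
      rw [← Real.exp_add, show -(N:ℝ)/2 + (N:ℝ)/2 = 0 by ring, Real.exp_zero]
    have efac : Real.sqrt ((m ! : ℝ) / ((N - 1)! : ℝ))
        * Real.sqrt (((N - 1)! : ℝ) / (m ! : ℝ)) = 1 := by
      rw [← Real.sqrt_mul (by positivity),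
        show ((m ! : ℝ) / ((N - 1)! : ℝ)) * (((N - 1)! : ℝ) / (m ! : ℝ)) = 1 by
          field_simp]
      exact Real.sqrt_one
    have epow : (N:ℝ) ^ (((N:ℝ) - m - 1)/2) * (N:ℝ) ^ (-((α:ℝ) + 1) / 2)
        = (N:ℝ) ^ (-(1:ℝ)/2) := by
      rw [← Real.rpow_add hNpos]; congr 1; rw [hαr]; ring
    have esqrtN : (N:ℝ) ^ (-(1:ℝ)/2) * Real.sqrt (N:ℝ) = 1 := by
      rw [Real.sqrt_eq_rpow, ← Real.rpow_add hNpos]; norm_num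
    have esplit : Real.sqrt ((N:ℝ) * (4 * Real.sqrt ((N:ℝ) * m)) / (4 * (N:ℝ) * m - (m:ℝ)^2))
        = Real.sqrt (N:ℝ)
          * Real.sqrt (4 * Real.sqrt ((N:ℝ) * m) / (4 * (N:ℝ) * m - (m:ℝ)^2)) := by
      rw [mul_div_assoc, Real.sqrt_mul hNpos.le]
    calc |Real.exp (-(N : ℝ) / 2) * (N : ℝ) ^ (((N : ℝ) - m - 1) / 2)
          * Real.sqrt ((m ! : ℝ) / ((N - 1)! : ℝ)) * assocLaguerre m α N|
        = Real.exp (-(N : ℝ) / 2) * (N : ℝ) ^ (((N : ℝ) - m - 1) / 2)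
          * Real.sqrt ((m ! : ℝ) / ((N - 1)! : ℝ)) * |assocLaguerre m α N| := by
          rw [abs_mul, abs_of_pos hP]
      _ < Real.exp (-(N : ℝ) / 2) * (N : ℝ) ^ (((N : ℝ) - m - 1) / 2)
          * Real.sqrt ((m ! : ℝ) / ((N - 1)! : ℝ))
          * (Real.sqrt (((N - 1)! : ℝ) / (m ! : ℝ))
            * Real.sqrt ((N:ℝ) * ((Real.sqrt (N:ℝ) + Real.sqrt (m:ℝ))^2
                  - (Real.sqrt (N:ℝ) - Real.sqrt (m:ℝ))^2)
              / (((N:ℝ) - (Real.sqrt (N:ℝ) - Real.sqrt (m:ℝ))^2)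
                  * ((Real.sqrt (N:ℝ) + Real.sqrt (m:ℝ))^2 - (N:ℝ))))
            * Real.exp ((N:ℝ)/2) * (N:ℝ) ^ (-((α:ℝ) + 1) / 2)) :=
          mul_lt_mul_of_pos_left hL hP
      _ = Real.sqrt (4 * Real.sqrt ((N : ℝ) * m) / (4 * (N : ℝ) * m - (m : ℝ) ^ 2)) := by
          rw [eX, er, esplit]
          calc Real.exp (-(N : ℝ) / 2) * (N : ℝ) ^ (((N : ℝ) - m - 1) / 2)
              * Real.sqrt ((m ! : ℝ) / ((N - 1)! : ℝ))
              * (Real.sqrt (((N - 1)! : ℝ) / (m ! : ℝ))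
                * (Real.sqrt (N:ℝ)
                  * Real.sqrt (4 * Real.sqrt ((N:ℝ) * m) / (4 * (N:ℝ) * m - (m:ℝ)^2)))
                * Real.exp ((N:ℝ)/2) * (N:ℝ) ^ (-((α:ℝ) + 1) / 2))
              = (Real.exp (-(N:ℝ)/2) * Real.exp ((N:ℝ)/2))
                * ((N:ℝ) ^ (((N:ℝ) - m - 1)/2) * (N:ℝ) ^ (-((α:ℝ) + 1) / 2)
                    * Real.sqrt (N:ℝ))
                * (Real.sqrt ((m ! : ℝ) / ((N - 1)! : ℝ))
                    * Real.sqrt (((N - 1)! : ℝ) / (m ! : ℝ)))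
                * Real.sqrt (4 * Real.sqrt ((N:ℝ) * m) / (4 * (N:ℝ) * m - (m:ℝ)^2)) := by
                ring
            _ = Real.sqrt (4 * Real.sqrt ((N:ℝ) * m) / (4 * (N:ℝ) * m - (m:ℝ)^2)) := by
                rw [eexp, efac, epow, esqrtN]; ring
  · have hden : (0:ℝ) < 4 * (N:ℝ) * m - (m:ℝ)^2 := by
      nlinarith [mul_pos hNpos hmpos, mul_le_mul_of_nonneg_right hmleN hmpos.le]
    have hle : 4 * Real.sqrt ((N:ℝ) * m) / (4 * (N:ℝ) * m - (m:ℝ)^2)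
        ≤ 4 / (3 * Real.sqrt ((N:ℝ) * m)) := by
      rw [div_le_div_iff₀ hden (by positivity)]
      nlinarith [hu2, mul_le_mul_of_nonneg_right hmleN hmpos.le]
    have h4 : Real.sqrt (4:ℝ) = 2 := by
      rw [show (4:ℝ) = 2^2 by norm_num, Real.sqrt_sq (by norm_num : (0:ℝ) ≤ 2)]
    have hsqq : Real.sqrt (Real.sqrt (N:ℝ)) * Real.sqrt (Real.sqrt (m:ℝ))
        = Real.sqrt (Real.sqrt ((N:ℝ) * m)) := by
      rw [← Real.sqrt_mul (Real.sqrt_nonneg _), hprod]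
    have hqN : (N:ℝ) ^ (-(1:ℝ)/4) = (Real.sqrt (Real.sqrt (N:ℝ)))⁻¹ := by
      have hh : Real.sqrt (Real.sqrt (N:ℝ)) = (N:ℝ) ^ ((1:ℝ)/4) := by
        rw [Real.sqrt_eq_rpow, Real.sqrt_eq_rpow]
        rw [← Real.rpow_mul hNpos.le]; norm_num
      rw [hh, show (-(1:ℝ)/4) = -((1:ℝ)/4) by norm_num, Real.rpow_neg hNpos.le]
    have hqm : (m:ℝ) ^ (-(1:ℝ)/4) = (Real.sqrt (Real.sqrt (m:ℝ)))⁻¹ := by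
      have hh : Real.sqrt (Real.sqrt (m:ℝ)) = (m:ℝ) ^ ((1:ℝ)/4) := by
        rw [Real.sqrt_eq_rpow, Real.sqrt_eq_rpow, ← Real.rpow_mul hmpos.le]; norm_num
      rw [hh, show (-(1:ℝ)/4) = -((1:ℝ)/4) by norm_num, Real.rpow_neg hmpos.le]
    have hqqN : 0 < Real.sqrt (Real.sqrt (N:ℝ)) :=
      Real.sqrt_pos.2 (Real.sqrt_pos.2 hNpos)
    have hqqm : 0 < Real.sqrt (Real.sqrt (m:ℝ)) :=
      Real.sqrt_pos.2 (Real.sqrt_pos.2 hmpos)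
    have hqqu : 0 < Real.sqrt (Real.sqrt ((N:ℝ) * m)) :=
      Real.sqrt_pos.2 hupos
    have h3pos : 0 < Real.sqrt (3:ℝ) := Real.sqrt_pos.2 (by norm_num)
    have hsq_u : Real.sqrt (Real.sqrt ((N:ℝ)*m)) ^ 2 = Real.sqrt ((N:ℝ)*m) :=
      Real.sq_sqrt hupos.le
    calc Real.sqrt (4 * Real.sqrt ((N:ℝ) * m) / (4 * (N:ℝ) * m - (m:ℝ)^2))
        ≤ Real.sqrt (4 / (3 * Real.sqrt ((N:ℝ) * m))) := Real.sqrt_le_sqrt hle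
      _ = 2 / (Real.sqrt 3 * Real.sqrt (Real.sqrt ((N:ℝ) * m))) := by
          rw [Real.sqrt_div (by norm_num : (0:ℝ) ≤ 4),
            Real.sqrt_mul (by norm_num : (0:ℝ) ≤ 3), h4]
      _ = 2 / Real.sqrt 3 * (N:ℝ) ^ (-(1:ℝ)/4) * (m:ℝ) ^ (-(1:ℝ)/4) := by
          rw [hqN, hqm, ← hsqq]
          rw [div_eq_iff (by positivity), mul_comm]
          field_simp
end

section
/- (One-body reduction formula for the quadratic evolution applied to factorized data) Let φ ∈ L²(ℝ³) with ‖φ‖ = 1 and let G : ℝ³ × ℝ³ → ℂ with G(x,·) ∈ L²(ℝ³). Then the symmetric (N−1)-particle function Ψ_x(x₁,…,x_{N−1}) = Σ_{i=1}^{N−1} G(x, x_i) ∏_{j≠i} φ(x_j) − N (∫ G(x,z) \overline{φ(z)} dz) ∏_{j=1}^{N−1} φ(x_j) satisfies ⟨Ψ_y, Ψ_x⟩_{L²(ℝ^{3(N−1)})} = (N−1) ∫ \overline{G(y,z)} G(x,z) dz − (N−2) (∫ \overline{G(y,z)} φ(z) dz)(∫ G(x,z) \overline{φ(z)} dz). 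-/
open MeasureTheory Finset
open scoped ComplexConjugate

section Helpers

variable {α M : Type*} [CommMonoid M]

lemma prod_if_single {n : ℕ} (g q : α → M) (i : Fin n) (X : Fin n → α) :
    g (X i) * ∏ j ∈ univ.erase i, q (X j)
      = ∏ j, (if j = i then g else q) (X j) := by
  rw [← Finset.mul_prod_erase univ (fun j => (if j = i then g else q) (X j)) (mem_univ i)]
  rw [if_pos rfl]
  congr 1
  exact (Finset.prod_congr rfl fun j hj => by rw [if_neg (Finset.ne_of_mem_erase hj)]).symm

lemma prod_if_const_single {n : ℕ} (a : M) (i : Fin n) :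
    (∏ j : Fin n, if j = i then a else 1) = a := by
  rw [Finset.prod_ite_eq' univ i (fun _ => a)]
  simp

lemma prod_if_two {n : ℕ} {i k : Fin n} (hik : i ≠ k) (a c : M) :
    (∏ j : Fin n, if j = i then a else if j = k then c else 1) = a * c := by
  rw [← Finset.mul_prod_erase univ _ (mem_univ i), if_pos rfl]
  have hk : k ∈ (univ : Finset (Fin n)).erase i := by
    simp [Ne.symm hik]
  rw [← Finset.mul_prod_erase _ _ hk, if_neg (Ne.symm hik), if_pos rfl]
  have : ∀ j ∈ ((univ : Finset (Fin n)).erase i).erase k,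
      (if j = i then a else if j = k then c else 1) = 1 := by
    intro j hj
    rw [if_neg (Finset.ne_of_mem_erase (Finset.mem_of_mem_erase hj)),
      if_neg (Finset.ne_of_mem_erase hj)]
  rw [Finset.prod_congr rfl this, Finset.prod_const_one, mul_one]

end Helpers

section CommHelpers

variable {α R : Type*} [CommRing R]

lemma combine_single {n : ℕ} (g cq fq : α → R) (i : Fin n) (X : Fin n → α) :
    (g (X i) * ∏ j ∈ univ.erase i, cq (X j)) * ∏ j, fq (X j)
      = ∏ j, (if j = i then fun z => g z * fq z else fun z => cq z * fq z) (X j) := by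
  rw [← prod_if_single (fun z => g z * fq z) (fun z => cq z * fq z) i X,
    ← Finset.mul_prod_erase univ (fun j => fq (X j)) (mem_univ i),
    Finset.prod_mul_distrib]
  ring

lemma combine_single' {n : ℕ} (g cq fq : α → R) (k : Fin n) (X : Fin n → α) :
    (∏ j, cq (X j)) * (g (X k) * ∏ j ∈ univ.erase k, fq (X j))
      = ∏ j, (if j = k then fun z => cq z * g z else fun z => cq z * fq z) (X j) := by
  rw [← prod_if_single (fun z => cq z * g z) (fun z => cq z * fq z) k X,
    ← Finset.mul_prod_erase univ (fun j => cq (X j)) (mem_univ k),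
    Finset.prod_mul_distrib]
  ring

lemma combine_pair {n : ℕ} (gy gx cq fq : α → R) (i k : Fin n) (X : Fin n → α) :
    (gy (X i) * ∏ j ∈ univ.erase i, cq (X j))
        * (gx (X k) * ∏ j ∈ univ.erase k, fq (X j))
      = ∏ j, (if j = i then (if i = k then fun z => gy z * gx z else fun z => gy z * fq z)
              else if j = k then fun z => cq z * gx z else fun z => cq z * fq z) (X j) := by
  by_cases h : i = k
  · subst h
    have hcollapse : ∀ j : Fin n,
        (if j = i then (if i = i then fun z => gy z * gx z else fun z => gy z * fq z)
          else if j = i then fun z => cq z * gx z else fun z => cq z * fq z) (X j)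
        = (if j = i then fun z => gy z * gx z else fun z => cq z * fq z) (X j) := by
      intro j
      by_cases hj : j = i <;> simp [hj]
    rw [Finset.prod_congr rfl fun j _ => hcollapse j,
      ← prod_if_single (fun z => gy z * gx z) (fun z => cq z * fq z) i X,
      Finset.prod_mul_distrib]
    ring
  · have hk : k ∈ (univ : Finset (Fin n)).erase i := by simp [Ne.symm h]
    have hi : i ∈ (univ : Finset (Fin n)).erase k := by simp [h]
    rw [← Finset.mul_prod_erase _ (fun j => cq (X j)) hk,
      ← Finset.mul_prod_erase _ (fun j => fq (X j)) hi,
      Finset.erase_right_comm (a := k) (b := i)]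
    rw [← Finset.mul_prod_erase univ _ (mem_univ i), if_pos rfl, if_neg h,
      ← Finset.mul_prod_erase _ _ hk, if_neg (Ne.symm h), if_pos rfl]
    have : ∀ j ∈ ((univ : Finset (Fin n)).erase i).erase k,
        (if j = i then fun z => gy z * fq z
          else if j = k then fun z => cq z * gx z else fun z => cq z * fq z) (X j)
        = cq (X j) * fq (X j) := by
      intro j hj
      rw [if_neg (Finset.ne_of_mem_erase (Finset.mem_of_mem_erase hj)),
        if_neg (Finset.ne_of_mem_erase hj)]
    rw [Finset.prod_congr rfl this, Finset.prod_mul_distrib]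
    ring

end CommHelpers

lemma integral_prod_coord {n : ℕ} (F : Fin n → (Fin 3 → ℝ) → ℂ) :
    ∫ X : Fin n → Fin 3 → ℝ, ∏ j, F j (X j) = ∏ j, ∫ z, F j z :=
  MeasureTheory.integral_fintype_prod_eq_prod _

lemma integral_comb {α : Type*} [MeasureSpace α] (A B C D : α → ℂ)
    (hA : Integrable A) (hB : Integrable B) (hC : Integrable C) (hD : Integrable D) :
    (∫ x, (A x - B x - C x + D x)) = (∫ x, A x) - (∫ x, B x) - (∫ x, C x) + ∫ x, D x := by
  have h1 : (∫ x, (A x - B x - C x + D x)) = (∫ x, (A x - B x - C x)) + ∫ x, D x :=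
    integral_add ((hA.sub hB).sub hC) hD
  have h2 : (∫ x, (A x - B x - C x)) = (∫ x, (A x - B x)) - ∫ x, C x :=
    integral_sub (hA.sub hB) hC
  have h3 : (∫ x, (A x - B x)) = (∫ x, A x) - ∫ x, B x := integral_sub hA hB
  rw [h1, h2, h3]

lemma main_calc {n : ℕ} (gy gx cφ fφ : (Fin 3 → ℝ) → ℂ)
    (hui : Integrable (fun z => gy z * gx z))
    (hvi : Integrable (fun z => gy z * fφ z))
    (hwi : Integrable (fun z => cφ z * gx z))
    (hqi : Integrable (fun z => cφ z * fφ z))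
    (hq1 : (∫ z, cφ z * fφ z) = 1) (CA CB : ℂ) :
    (∫ X : Fin n → Fin 3 → ℝ,
      ((∑ i, gy (X i) * ∏ j ∈ univ.erase i, cφ (X j)) - CA * ∏ j, cφ (X j))
        * ((∑ k, gx (X k) * ∏ j ∈ univ.erase k, fφ (X j)) - CB * ∏ j, fφ (X j)))
      = ((n : ℂ) * (∫ z, gy z * gx z)
          + ((n : ℂ) * ((n - 1 : ℕ) : ℂ)) * ((∫ z, gy z * fφ z) * (∫ z, cφ z * gx z)))
        - CB * ((n : ℂ) * ∫ z, gy z * fφ z)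
        - CA * ((n : ℂ) * ∫ z, cφ z * gx z) + CA * CB := by
  have key : ∀ X : Fin n → Fin 3 → ℝ,
      ((∑ i, gy (X i) * ∏ j ∈ univ.erase i, cφ (X j)) - CA * ∏ j, cφ (X j))
        * ((∑ k, gx (X k) * ∏ j ∈ univ.erase k, fφ (X j)) - CB * ∏ j, fφ (X j))
      = (∑ i, ∑ k, ∏ j,
            (if j = i then (if i = k then fun z => gy z * gx z else fun z => gy z * fφ z)
              else if j = k then fun z => cφ z * gx z else fun z => cφ z * fφ z) (X j))
        - CB * ∑ i, ∏ j,
            (if j = i then fun z => gy z * fφ z else fun z => cφ z * fφ z) (X j)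
        - CA * ∑ k, ∏ j,
            (if j = k then fun z => cφ z * gx z else fun z => cφ z * fφ z) (X j)
        + CA * CB * ∏ j, (cφ (X j) * fφ (X j)) := by
    intro X
    have e1 : (∑ i, gy (X i) * ∏ j ∈ univ.erase i, cφ (X j))
        * (∑ k, gx (X k) * ∏ j ∈ univ.erase k, fφ (X j))
        = ∑ i, ∑ k, ∏ j,
            (if j = i then (if i = k then fun z => gy z * gx z else fun z => gy z * fφ z)
              else if j = k then fun z => cφ z * gx z else fun z => cφ z * fφ z) (X j) := by
      rw [Finset.sum_mul_sum]
      exact Finset.sum_congr rfl fun i _ => Finset.sum_congr rfl fun k _ =>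
        combine_pair gy gx cφ fφ i k X
    have e2 : (∑ i, gy (X i) * ∏ j ∈ univ.erase i, cφ (X j)) * ∏ j, fφ (X j)
        = ∑ i, ∏ j,
            (if j = i then fun z => gy z * fφ z else fun z => cφ z * fφ z) (X j) := by
      rw [Finset.sum_mul]
      exact Finset.sum_congr rfl fun i _ => combine_single gy cφ fφ i X
    have e3 : (∏ j, cφ (X j)) * (∑ k, gx (X k) * ∏ j ∈ univ.erase k, fφ (X j))
        = ∑ k, ∏ j,
            (if j = k then fun z => cφ z * gx z else fun z => cφ z * fφ z) (X j) := by
      rw [Finset.mul_sum]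
      exact Finset.sum_congr rfl fun k _ => combine_single' gx cφ fφ k X
    have e4 : (∏ j, cφ (X j)) * ∏ j, fφ (X j) = ∏ j, (cφ (X j) * fφ (X j)) :=
      Finset.prod_mul_distrib.symm
    linear_combination e1 - CB * e2 - CA * e3 + CA * CB * e4
  simp only [key]
  have hm : ∀ (F : Fin n → (Fin 3 → ℝ) → ℂ), (∀ j, Integrable (F j)) →
      Integrable (fun X : Fin n → Fin 3 → ℝ => ∏ j, F j (X j)) :=
    fun F hF => Integrable.fintype_prod hF
  have hI1 : Integrable (fun X : Fin n → Fin 3 → ℝ => ∑ i, ∑ k, ∏ j,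
      (if j = i then (if i = k then fun z => gy z * gx z else fun z => gy z * fφ z)
        else if j = k then fun z => cφ z * gx z else fun z => cφ z * fφ z) (X j)) :=
    integrable_finset_sum _ fun i _ => integrable_finset_sum _ fun k _ =>
      hm _ fun j => by split_ifs <;> assumption
  have hI2 : Integrable (fun X : Fin n → Fin 3 → ℝ => ∑ i, ∏ j,
      (if j = i then fun z => gy z * fφ z else fun z => cφ z * fφ z) (X j)) :=
    integrable_finset_sum _ fun i _ => hm _ fun j => by split_ifs <;> assumption
  have hI3 : Integrable (fun X : Fin n → Fin 3 → ℝ => ∑ k, ∏ j,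
      (if j = k then fun z => cφ z * gx z else fun z => cφ z * fφ z) (X j)) :=
    integrable_finset_sum _ fun k _ => hm _ fun j => by split_ifs <;> assumption
  have hI4 : Integrable (fun X : Fin n → Fin 3 → ℝ => ∏ j, (cφ (X j) * fφ (X j))) := by
    exact hm (fun _ => fun z => cφ z * fφ z) fun _ => hqi
  refine Eq.trans (integral_comb _ _ _ _ hI1 (hI2.const_mul CB) (hI3.const_mul CA)
    (hI4.const_mul (CA * CB))) ?_
  beta_reduce
  rw [integral_const_mul CB, integral_const_mul CA, integral_const_mul (CA * CB)]
  have E1 : (∫ X : Fin n → Fin 3 → ℝ, ∑ i, ∑ k, ∏ j,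
      (if j = i then (if i = k then fun z => gy z * gx z else fun z => gy z * fφ z)
        else if j = k then fun z => cφ z * gx z else fun z => cφ z * fφ z) (X j))
      = (n : ℂ) * (∫ z, gy z * gx z)
        + ((n : ℂ) * ((n - 1 : ℕ) : ℂ)) * ((∫ z, gy z * fφ z) * (∫ z, cφ z * gx z)) := by
    rw [integral_finset_sum _ (fun i _ => integrable_finset_sum _ fun k _ =>
      hm _ fun j => by split_ifs <;> assumption)]
    have step : ∀ i k : Fin n, (∫ X : Fin n → Fin 3 → ℝ, ∏ j,
        (if j = i then (if i = k then fun z => gy z * gx z else fun z => gy z * fφ z)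
          else if j = k then fun z => cφ z * gx z else fun z => cφ z * fφ z) (X j))
        = if i = k then (∫ z, gy z * gx z)
            else (∫ z, gy z * fφ z) * (∫ z, cφ z * gx z) := by
      intro i k
      refine Eq.trans (integral_prod_coord _) ?_
      beta_reduce
      have hval : ∀ j : Fin n, (∫ z,
          (if j = i then (if i = k then fun z => gy z * gx z else fun z => gy z * fφ z)
            else if j = k then fun z => cφ z * gx z else fun z => cφ z * fφ z) z)
          = if j = i then (if i = k then (∫ z, gy z * gx z) else (∫ z, gy z * fφ z))
            else if j = k then (∫ z, cφ z * gx z) else 1 := by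
        intro j
        split_ifs <;> first | rfl | exact hq1
      rw [Finset.prod_congr rfl fun j _ => hval j]
      by_cases h : i = k
      · subst h
        have hred : ∀ j : Fin n,
            (if j = i then (if i = i then (∫ z, gy z * gx z) else (∫ z, gy z * fφ z))
              else if j = i then (∫ z, cφ z * gx z) else 1)
            = if j = i then (∫ z, gy z * gx z) else 1 := fun j => by
          by_cases hj : j = i <;> simp [hj]
        rw [Finset.prod_congr rfl fun j _ => hred j, prod_if_const_single, if_pos rfl]
      · have hred : ∀ j : Fin n,
            (if j = i then (if i = k then (∫ z, gy z * gx z) else (∫ z, gy z * fφ z))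
              else if j = k then (∫ z, cφ z * gx z) else 1)
            = if j = i then (∫ z, gy z * fφ z) else if j = k then (∫ z, cφ z * gx z) else 1 :=
          fun j => by simp [h]
        rw [Finset.prod_congr rfl fun j _ => hred j, prod_if_two h, if_neg h]
    calc (∑ i : Fin n, ∫ X : Fin n → Fin 3 → ℝ, ∑ k, ∏ j,
        (if j = i then (if i = k then fun z => gy z * gx z else fun z => gy z * fφ z)
          else if j = k then fun z => cφ z * gx z else fun z => cφ z * fφ z) (X j))
        = ∑ i : Fin n, ∑ k : Fin n,
            (if i = k then (∫ z, gy z * gx z)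
              else (∫ z, gy z * fφ z) * (∫ z, cφ z * gx z)) := by
          refine Finset.sum_congr rfl fun i _ => ?_
          rw [integral_finset_sum _ (fun k _ => hm _ fun j => by split_ifs <;> assumption)]
          exact Finset.sum_congr rfl fun k _ => step i k
      _ = ∑ i : Fin n, ((∫ z, gy z * gx z)
            + ((n - 1 : ℕ) : ℂ) * ((∫ z, gy z * fφ z) * (∫ z, cφ z * gx z))) := by
          refine Finset.sum_congr rfl fun i _ => ?_
          rw [← Finset.add_sum_erase _ _ (mem_univ i), if_pos rfl]
          congr 1
          rw [Finset.sum_congr rfl (fun k hk =>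
              if_neg (fun h => Finset.ne_of_mem_erase hk h.symm)),
            Finset.sum_const, Finset.card_erase_of_mem (mem_univ i), Finset.card_univ,
            Fintype.card_fin, nsmul_eq_mul]
      _ = (n : ℂ) * (∫ z, gy z * gx z)
            + ((n : ℂ) * ((n - 1 : ℕ) : ℂ)) * ((∫ z, gy z * fφ z) * (∫ z, cφ z * gx z)) := by
          rw [Finset.sum_const, Finset.card_univ, Fintype.card_fin, nsmul_eq_mul]
          ring
  have E2 : (∫ X : Fin n → Fin 3 → ℝ, ∑ i, ∏ j,
      (if j = i then fun z => gy z * fφ z else fun z => cφ z * fφ z) (X j))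
      = (n : ℂ) * ∫ z, gy z * fφ z := by
    rw [integral_finset_sum _ (fun i _ => hm _ fun j => by split_ifs <;> assumption)]
    have step : ∀ i : Fin n, (∫ X : Fin n → Fin 3 → ℝ, ∏ j,
        (if j = i then fun z => gy z * fφ z else fun z => cφ z * fφ z) (X j))
        = ∫ z, gy z * fφ z := by
      intro i
      refine Eq.trans (integral_prod_coord _) ?_
      beta_reduce
      have hval : ∀ j : Fin n, (∫ z,
          (if j = i then fun z => gy z * fφ z else fun z => cφ z * fφ z) z)
          = if j = i then (∫ z, gy z * fφ z) else 1 := by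
        intro j; split_ifs <;> first | rfl | exact hq1
      rw [Finset.prod_congr rfl fun j _ => hval j, prod_if_const_single]
    rw [Finset.sum_congr rfl fun i _ => step i, Finset.sum_const, Finset.card_univ,
      Fintype.card_fin, nsmul_eq_mul]
  have E3 : (∫ X : Fin n → Fin 3 → ℝ, ∑ k, ∏ j,
      (if j = k then fun z => cφ z * gx z else fun z => cφ z * fφ z) (X j))
      = (n : ℂ) * ∫ z, cφ z * gx z := by
    rw [integral_finset_sum _ (fun k _ => hm _ fun j => by split_ifs <;> assumption)]
    have step : ∀ k : Fin n, (∫ X : Fin n → Fin 3 → ℝ, ∏ j,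
        (if j = k then fun z => cφ z * gx z else fun z => cφ z * fφ z) (X j))
        = ∫ z, cφ z * gx z := by
      intro k
      refine Eq.trans (integral_prod_coord _) ?_
      beta_reduce
      have hval : ∀ j : Fin n, (∫ z,
          (if j = k then fun z => cφ z * gx z else fun z => cφ z * fφ z) z)
          = if j = k then (∫ z, cφ z * gx z) else 1 := by
        intro j; split_ifs <;> first | rfl | exact hq1
      rw [Finset.prod_congr rfl fun j _ => hval j, prod_if_const_single]
    rw [Finset.sum_congr rfl fun k _ => step k, Finset.sum_const, Finset.card_univ,
      Fintype.card_fin, nsmul_eq_mul]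
  have E4 : (∫ X : Fin n → Fin 3 → ℝ, ∏ j, (cφ (X j) * fφ (X j))) = 1 := by
    refine Eq.trans (integral_prod_coord (fun _ : Fin n => fun z => cφ z * fφ z)) ?_
    beta_reduce
    rw [Finset.prod_congr rfl fun j _ => hq1, Finset.prod_const_one]
  rw [E1, E2, E3, E4]
  ring

/-- The symmetric `(N−1)`-particle function
`Ψ_x(x₁,…,x_{N−1}) = Σ_{i} G(x, x_i) ∏_{j≠i} φ(x_j) − N (∫ G(x,z) conj(φ(z)) dz) ∏_j φ(x_j)`. -/
noncomputable def PsiFun (N : ℕ) (φ : (Fin 3 → ℝ) → ℂ)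
    (G : (Fin 3 → ℝ) → (Fin 3 → ℝ) → ℂ) (x : Fin 3 → ℝ)
    (X : Fin (N - 1) → Fin 3 → ℝ) : ℂ :=
  (∑ i : Fin (N - 1), G x (X i) * ∏ j ∈ univ.erase i, φ (X j))
    - (N : ℂ) * (∫ z, G x z * conj (φ z)) * ∏ j : Fin (N - 1), φ (X j)

/-- (One-body reduction formula for the quadratic evolution applied to
factorized data) Let `φ ∈ L²(ℝ³)` with `‖φ‖ = 1` and let `G : ℝ³ × ℝ³ → ℂ` with
`G(x,·) ∈ L²(ℝ³)`. Then
`⟨Ψ_y, Ψ_x⟩_{L²(ℝ^{3(N−1)})} = (N−1) ∫ conj(G(y,z)) G(x,z) dz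
  − (N−2) (∫ conj(G(y,z)) φ(z) dz)(∫ G(x,z) conj(φ(z)) dz)`. -/
theorem one_body_reduction (N : ℕ) (hN : 2 ≤ N)
    (φ : (Fin 3 → ℝ) → ℂ) (G : (Fin 3 → ℝ) → (Fin 3 → ℝ) → ℂ)
    (hφ : MemLp φ 2 volume) (hφnorm : ∫ z, ‖φ z‖ ^ 2 = 1)
    (x y : Fin 3 → ℝ)
    (hGx : MemLp (G x) 2 volume) (hGy : MemLp (G y) 2 volume) :
    (∫ X : Fin (N - 1) → Fin 3 → ℝ, conj (PsiFun N φ G y X) * PsiFun N φ G x X)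
      = ((N : ℂ) - 1) * (∫ z, conj (G y z) * G x z)
        - ((N : ℂ) - 2) * (∫ z, conj (G y z) * φ z) * (∫ z, G x z * conj (φ z)) := by
  have hconj : ∀ f : (Fin 3 → ℝ) → ℂ, MemLp f 2 volume →
      MemLp (fun z => conj (f z)) 2 volume := fun f hf =>
    hf.of_le (RCLike.continuous_conj.comp_aestronglyMeasurable hf.1)
      (Filter.Eventually.of_forall fun z => by simp)
  have hmul : ∀ f g : (Fin 3 → ℝ) → ℂ, MemLp f 2 volume → MemLp g 2 volume →
      Integrable (fun z => f z * g z) := fun f g hf hg =>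
    memLp_one_iff_integrable.mp (hg.smul hf (r := 1) (hpqr := ⟨by norm_num [ENNReal.inv_two_add_inv_two]⟩))
  have hq1 : (∫ z, conj (φ z) * φ z) = 1 := by
    have h : (fun z : Fin 3 → ℝ => conj (φ z) * φ z) = fun z => ((‖φ z‖ ^ 2 : ℝ) : ℂ) := by
      funext z; rw [RCLike.conj_mul]; norm_cast
    rw [h]
    refine Eq.trans (integral_ofReal (𝕜 := ℂ)) ?_
    show ((∫ (z : Fin 3 → ℝ), ‖φ z‖ ^ 2 : ℝ) : ℂ) = 1
    rw [hφnorm]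
    simp
  have hA : ∀ X : Fin (N - 1) → Fin 3 → ℝ, conj (PsiFun N φ G y X)
      = (∑ i, conj (G y (X i)) * ∏ j ∈ univ.erase i, conj (φ (X j)))
        - (N : ℂ) * conj (∫ z, G y z * conj (φ z)) * ∏ j, conj (φ (X j)) := by
    intro X
    simp only [PsiFun, map_sub, map_mul, map_sum, map_prod, map_natCast]
  have hmain := main_calc (n := N - 1) (fun z => conj (G y z)) (G x) (fun z => conj (φ z)) φ
    (hmul _ _ (hconj _ hGy) hGx) (hmul _ _ (hconj _ hGy) hφ)
    (hmul _ _ (hconj _ hφ) hGx) (hmul _ _ (hconj _ hφ) hφ) hq1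
    ((N : ℂ) * conj (∫ z, G y z * conj (φ z))) ((N : ℂ) * (∫ z, G x z * conj (φ z)))
  refine Eq.trans (Eq.trans (congrArg (integral volume) (funext fun X => ?_)) hmain) ?_
  · rw [hA X]
    rfl
  · beta_reduce
    have hb : conj (∫ z, G y z * conj (φ z)) = ∫ z, conj (G y z) * φ z := by
      rw [← integral_conj]
      congr 1
      funext z
      rw [map_mul, Complex.conj_conj]
    have hw' : (∫ z, conj (φ z) * G x z) = ∫ z, G x z * conj (φ z) :=
      congrArg (integral volume) (funext fun z => mul_comm _ _)
    rw [hb, hw']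
    have h1 : ((N - 1 : ℕ) : ℂ) = (N : ℂ) - 1 := by
      rw [Nat.cast_sub (by omega : 1 ≤ N), Nat.cast_one]
    have h2 : ((N - 1 - 1 : ℕ) : ℂ) = (N : ℂ) - 2 := by
      have hh : N - 1 - 1 = N - 2 := by omega
      rw [hh, Nat.cast_sub hN]
      norm_num
    rw [h1, h2]
    ring
end

section
/- (L² error controls trace-norm convergence for rank considerations) Let γ be a positive trace-class operator on L²(ℝ³) with Tr γ = 1, and let P = |φ⟩⟨φ| be a rank-one projection. If ‖γ − P‖_{HS} ≤ ε, then Tr|γ − P| ≤ C ε for an absolute constant C, where ‖·‖_{HS} is the Hilbert–Schmidt norm. -/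
open MeasureTheory

set_option maxHeartbeats 1000000

local notation "⟪" x ", " y "⟫" => @inner ℂ _ _ x y

private lemma parseval_aux {H : Type} [NormedAddCommGroup H] [InnerProductSpace ℂ H]
    [CompleteSpace H] {ι : Type} (b : HilbertBasis ι ℂ H) (x : H) :
    HasSum (fun i => ‖⟪b i, x⟫‖ ^ 2) (‖x‖ ^ 2) := by
  have h := (b.hasSum_inner_mul_inner x x).mapL Complex.reCLM
  have h1 : ∀ i, Complex.reCLM (⟪x, b i⟫ * ⟪b i, x⟫) = ‖⟪b i, x⟫‖ ^ 2 := by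
    intro i
    rw [← inner_conj_symm x (b i), RCLike.conj_mul]
    simp [← Complex.ofReal_pow]
  have h2 : Complex.reCLM ⟪x, x⟫ = ‖x‖ ^ 2 := by
    simpa using inner_self_eq_norm_sq (𝕜 := ℂ) x
  rw [← h2, ← funext h1]
  exact h

private lemma parseval_aux' {H : Type} [NormedAddCommGroup H] [InnerProductSpace ℂ H]
    [CompleteSpace H] {ι : Type} (b : HilbertBasis ι ℂ H) (x : H) :
    HasSum (fun i => ‖⟪x, b i⟫‖ ^ 2) (‖x‖ ^ 2) := by
  have h := parseval_aux b x
  have h1 : ∀ i, ‖⟪b i, x⟫‖ ^ 2 = ‖⟪x, b i⟫‖ ^ 2 := fun i => by rw [norm_inner_symm]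
  rw [← funext h1]
  exact h

/-- (L² error controls trace-norm convergence) Let `γ` be a positive trace-class
operator on a Hilbert space with `Tr γ = 1`, and let `P = |φ⟩⟨φ|` be a rank-one projection. If
`‖γ − P‖_{HS} ≤ ε`, then `Tr|γ − P| ≤ C ε` for an absolute constant `C`.

The trace is expressed via a Hilbert basis `e`, the Hilbert–Schmidt norm via
`∑ᵢ ‖(γ−P)(e i)‖²`, and the trace norm of the self-adjoint compact operator `γ − P` via a
diagonalizing Hilbert basis `f` with real eigenvalues `lam`, as `∑ₖ |lam k|`. -/
theorem trace_norm_from_HS :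
    ∃ C : ℝ, 0 < C ∧
      ∀ (H : Type) [NormedAddCommGroup H] [InnerProductSpace ℂ H] [CompleteSpace H]
        (γ P : H →L[ℂ] H) (φ : H) (ι κ : Type)
        (e : HilbertBasis ι ℂ H) (f : HilbertBasis κ ℂ H) (lam : κ → ℝ) (ε : ℝ),
        ‖φ‖ = 1 →
        (∀ ξ : H, P ξ = (inner ℂ φ ξ : ℂ) • φ) →
        γ.IsPositive →
        HasSum (fun i => (inner ℂ (e i) (γ (e i)) : ℂ).re) 1 →
        (∀ k, γ (f k) - P (f k) = (lam k : ℂ) • f k) →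
        Summable (fun k => |lam k|) →
        0 ≤ ε →
        (∑' i, ‖γ (e i) - P (e i)‖ ^ 2) ≤ ε ^ 2 →
        (∑' k, |lam k|) ≤ C * ε := by
  refine ⟨2, by norm_num, ?_⟩
  intro H _ _ _ γ P φ ι κ e f lam ε hφ hP hγ hγtr hf hlamabs hε hHS
  have hfo := f.orthonormal
  have hfn : ∀ k, ‖f k‖ = 1 := fun k => hfo.1 k
  have hγsym : ∀ x y : H, ⟪γ x, y⟫ = ⟪x, γ y⟫ := fun x y => by
    simpa using hγ.isSelfAdjoint.isSymmetric x y
  have hPsym : ∀ x y : H, ⟪P x, y⟫ = ⟪x, P y⟫ := by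
    intro x y
    simp only [hP, inner_smul_left, inner_smul_right, inner_conj_symm]
    ring
  -- key eigenvalue relation
  have hfT : ∀ (k : κ) (x : H), ⟪f k, γ x - P x⟫ = (lam k : ℂ) * ⟪f k, x⟫ := by
    intro k x
    rw [inner_sub_right, ← hγsym, ← hPsym, ← inner_sub_left, hf k, inner_smul_left,
      Complex.conj_ofReal]
  -- summability of squares
  have hsq : Summable (fun k => lam k ^ 2) := by
    refine Summable.of_nonneg_of_le (fun k => sq_nonneg _) (fun k => ?_)
      (hlamabs.mul_left (∑' j, |lam j|))
    have h1 : |lam k| ≤ ∑' j, |lam j| := Summable.le_tsum hlamabs k (fun j _ => abs_nonneg _)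
    calc lam k ^ 2 = |lam k| * |lam k| := by rw [pow_two, ← abs_mul_abs_self]
      _ ≤ (∑' j, |lam j|) * |lam k| := mul_le_mul_of_nonneg_right h1 (abs_nonneg _)
  -- HS expansion per basis vector e i
  have hTei : ∀ i, HasSum (fun k => lam k ^ 2 * ‖⟪f k, e i⟫‖ ^ 2) (‖γ (e i) - P (e i)‖ ^ 2) := by
    intro i
    have h := parseval_aux f (γ (e i) - P (e i))
    have h1 : ∀ k, ‖⟪f k, γ (e i) - P (e i)⟫‖ ^ 2 = lam k ^ 2 * ‖⟪f k, e i⟫‖ ^ 2 := by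
      intro k
      rw [hfT k (e i), norm_mul, mul_pow, Complex.norm_real, Real.norm_eq_abs, sq_abs]
    rw [← funext h1]
    exact h
  -- summability of the double HS family (κ × ι)
  have htsum_g : ∀ (c : ℝ) (k : κ), ∑' i, c * ‖⟪f k, e i⟫‖ ^ 2 = c := by
    intro c k
    rw [((parseval_aux' e (f k)).mul_left c).tsum_eq, hfn k]
    norm_num
  have hF2 : Summable (fun p : κ × ι => lam p.1 ^ 2 * ‖⟪f p.1, e p.2⟫‖ ^ 2) := by
    refine (summable_prod_of_nonneg (fun p => by positivity)).2 ⟨fun k => ?_, ?_⟩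
    · exact Summable.mul_left (lam k ^ 2) (parseval_aux' e (f k)).summable
    · have h1 : (fun k : κ => ∑' i, lam k ^ 2 * ‖⟪f k, e i⟫‖ ^ 2) = fun k => lam k ^ 2 :=
        funext fun k => htsum_g _ k
      rw [h1]
      exact hsq
  -- HS norm identity
  have hHSeq : ∑' k, lam k ^ 2 = ∑' i, ‖γ (e i) - P (e i)‖ ^ 2 := by
    have hcomm := Summable.tsum_comm (f := fun k i => lam k ^ 2 * ‖⟪f k, e i⟫‖ ^ 2) hF2
    calc ∑' k, lam k ^ 2 = ∑' k, ∑' i, lam k ^ 2 * ‖⟪f k, e i⟫‖ ^ 2 :=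
          (tsum_congr fun k => htsum_g _ k).symm
      _ = ∑' i, ∑' k, lam k ^ 2 * ‖⟪f k, e i⟫‖ ^ 2 := hcomm.symm
      _ = ∑' i, ‖γ (e i) - P (e i)‖ ^ 2 := tsum_congr fun i => (hTei i).tsum_eq
  -- each eigenvalue bounded by ε
  have hlamle : ∀ k, |lam k| ≤ ε := by
    intro k
    have h1 : lam k ^ 2 ≤ ε ^ 2 :=
      le_trans (Summable.le_tsum hsq k fun j _ => sq_nonneg _) (by rw [hHSeq]; exact hHS)
    calc |lam k| = Real.sqrt (lam k ^ 2) := (Real.sqrt_sq_eq_abs _).symm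
      _ ≤ Real.sqrt (ε ^ 2) := Real.sqrt_le_sqrt h1
      _ = ε := Real.sqrt_sq hε
  -- trace of P in basis e
  have hPtr : HasSum (fun i => (⟪e i, P (e i)⟫).re) 1 := by
    have h := (e.hasSum_inner_mul_inner φ φ).mapL Complex.reCLM
    have h2 : Complex.reCLM ⟪φ, φ⟫ = 1 := by
      have := inner_self_eq_norm_sq (𝕜 := ℂ) φ
      rw [hφ, one_pow] at this
      simpa using this
    rw [h2] at h
    have h1 : ∀ i, Complex.reCLM (⟪φ, e i⟫ * ⟪e i, φ⟫) = (⟪e i, P (e i)⟫).re := by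
      intro i
      rw [hP, inner_smul_right]
      rfl
    rw [← funext h1]
    exact h
  -- trace of γ - P in basis e is 0
  have hTtr : HasSum (fun i => (⟪e i, γ (e i) - P (e i)⟫).re) 0 := by
    have h := hγtr.sub hPtr
    rw [sub_self] at h
    have h1 : ∀ i, (⟪e i, γ (e i)⟫).re - (⟪e i, P (e i)⟫).re = (⟪e i, γ (e i) - P (e i)⟫).re := by
      intro i
      rw [inner_sub_right, Complex.sub_re]
    rw [← funext h1]
    exact h
  -- per-i expansion of the trace terms in basis f
  have htr_i : ∀ i, HasSum (fun k => lam k * ‖⟪f k, e i⟫‖ ^ 2)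
      ((⟪e i, γ (e i) - P (e i)⟫).re) := by
    intro i
    have h := (f.hasSum_inner_mul_inner (e i) (γ (e i) - P (e i))).mapL Complex.reCLM
    have h1 : ∀ k, Complex.reCLM (⟪e i, f k⟫ * ⟪f k, γ (e i) - P (e i)⟫)
        = lam k * ‖⟪f k, e i⟫‖ ^ 2 := by
      intro k
      rw [hfT k (e i), ← inner_conj_symm (e i) (f k)]
      have : (starRingEnd ℂ) ⟪f k, e i⟫ * ((lam k : ℂ) * ⟪f k, e i⟫)
          = (lam k : ℂ) * ((starRingEnd ℂ) ⟪f k, e i⟫ * ⟪f k, e i⟫) := by ring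
      rw [this, RCLike.conj_mul]
      simp [← Complex.ofReal_pow]
    have h2 : Complex.reCLM ⟪e i, γ (e i) - P (e i)⟫ = (⟪e i, γ (e i) - P (e i)⟫).re := rfl
    rw [h2] at h
    rw [← funext h1]
    exact h
  -- summability of the double trace family
  have hG : Summable (fun p : κ × ι => lam p.1 * ‖⟪f p.1, e p.2⟫‖ ^ 2) := by
    have habs : Summable (fun p : κ × ι => |lam p.1| * ‖⟪f p.1, e p.2⟫‖ ^ 2) := by
      refine (summable_prod_of_nonneg (fun p => by positivity)).2 ⟨fun k => ?_, ?_⟩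
      · exact Summable.mul_left (|lam k|) (parseval_aux' e (f k)).summable
      · have h1 : (fun k : κ => ∑' i, |lam k| * ‖⟪f k, e i⟫‖ ^ 2) = fun k => |lam k| :=
          funext fun k => htsum_g _ k
        rw [h1]
        exact hlamabs
    refine Summable.of_abs ?_
    have h1 : (fun p : κ × ι => |lam p.1 * ‖⟪f p.1, e p.2⟫‖ ^ 2|)
        = fun p : κ × ι => |lam p.1| * ‖⟪f p.1, e p.2⟫‖ ^ 2 :=
      funext fun p => by rw [abs_mul, abs_of_nonneg (by positivity : (0:ℝ) ≤ ‖⟪f p.1, e p.2⟫‖ ^ 2)]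
    rw [h1]
    exact habs
  have hlamsum : Summable lam := Summable.of_abs hlamabs
  -- the trace identity : ∑ lam = 0
  have htr0 : ∑' k, lam k = 0 := by
    have hcomm := Summable.tsum_comm (f := fun k i => lam k * ‖⟪f k, e i⟫‖ ^ 2) hG
    calc ∑' k, lam k = ∑' k, ∑' i, lam k * ‖⟪f k, e i⟫‖ ^ 2 :=
          (tsum_congr fun k => htsum_g _ k).symm
      _ = ∑' i, ∑' k, lam k * ‖⟪f k, e i⟫‖ ^ 2 := hcomm.symm
      _ = ∑' i, (⟪e i, γ (e i) - P (e i)⟫).re := tsum_congr fun i => (htr_i i).tsum_eq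
      _ = 0 := hTtr.tsum_eq
  -- at most one negative eigenvalue
  have hphi : ∀ k, lam k < 0 → ⟪φ, f k⟫ ≠ 0 := by
    intro k hk h0
    have hPf : P (f k) = 0 := by rw [hP, h0, zero_smul]
    have hγf : γ (f k) = (lam k : ℂ) • f k := by
      have h1 := hf k
      rw [hPf, sub_zero] at h1
      exact h1
    have h2 := hγ.inner_nonneg_left (f k)
    rw [hγf, inner_smul_left, Complex.conj_ofReal, inner_self_eq_norm_sq_to_K, hfn k] at h2
    simp at h2
    linarith
  have huniq : ∀ k l, lam k < 0 → lam l < 0 → k = l := by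
    intro k l hk hl
    by_contra hne
    set a : ℂ := ⟪φ, f l⟫ with ha_def
    set b : ℂ := -⟪φ, f k⟫ with hb_def
    have ha : a ≠ 0 := hphi l hl
    set u : H := a • f k + b • f l with hu
    have hPu : P u = 0 := by
      have h0 : ⟪φ, u⟫ = 0 := by
        rw [hu, inner_add_right, inner_smul_right, inner_smul_right, ha_def, hb_def]
        ring
      rw [hP, h0, zero_smul]
    have hγu : γ u = (a * lam k) • f k + (b * lam l) • f l := by
      have h1 : γ u - P u = (a * lam k) • f k + (b * lam l) • f l := by
        have e1 : γ u - P u = a • (γ (f k) - P (f k)) + b • (γ (f l) - P (f l)) := by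
          simp only [hu, map_add, ContinuousLinearMap.map_smul, smul_sub]
          abel
        rw [e1, hf k, hf l, smul_smul, smul_smul]
      rw [← sub_add_cancel (γ u) (P u), h1, hPu, add_zero]
    have hkl : ⟪f k, f l⟫ = 0 := hfo.2 hne
    have hlk : ⟪f l, f k⟫ = 0 := hfo.2 (Ne.symm hne)
    have hkk : ⟪f k, f k⟫ = 1 := by rw [inner_self_eq_norm_sq_to_K, hfn k]; norm_num
    have hll : ⟪f l, f l⟫ = 1 := by rw [inner_self_eq_norm_sq_to_K, hfn l]; norm_num
    have hval : ⟪γ u, u⟫ = (lam k : ℂ) * ((starRingEnd ℂ) a * a)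
        + (lam l : ℂ) * ((starRingEnd ℂ) b * b) := by
      rw [hγu, hu]
      rw [inner_add_left, inner_add_right, inner_add_right, inner_smul_left, inner_smul_left,
        inner_smul_left, inner_smul_left, inner_smul_right, inner_smul_right, inner_smul_right,
        inner_smul_right, hkl, hlk, hkk, hll]
      simp only [map_mul, Complex.conj_ofReal, mul_zero, mul_one, add_zero, zero_add]
      ring
    have hpos := hγ.inner_nonneg_left u
    rw [hval] at hpos
    simp only [RCLike.conj_mul] at hpos
    have hpos' : (0:ℝ) ≤ lam k * ‖a‖ ^ 2 + lam l * ‖b‖ ^ 2 := by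
      have h := (Complex.le_def.mp hpos).1
      simpa [← Complex.ofReal_pow] using h
    have hna : 0 < ‖a‖ ^ 2 := pow_pos (norm_pos_iff.2 ha) 2
    have hnb : 0 ≤ ‖b‖ ^ 2 := by positivity
    nlinarith [hpos']
  -- conclusion
  by_cases hneg : ∃ k, lam k < 0
  · obtain ⟨k0, hk0⟩ := hneg
    have hnn : ∀ k, k ≠ k0 → 0 ≤ lam k := fun k hk =>
      le_of_not_gt fun h => hk (huniq k k0 h hk0)
    have hd : ∑' k, (|lam k| - lam k) = |lam k0| - lam k0 :=
      tsum_eq_single k0 fun k hk => by rw [abs_of_nonneg (hnn k hk), sub_self]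
    have hsplit : ∑' k, |lam k| = (∑' k, (|lam k| - lam k)) + ∑' k, lam k := by
      rw [← Summable.tsum_add (hlamabs.sub hlamsum) hlamsum]
      exact tsum_congr fun k => by ring
    rw [hsplit, htr0, add_zero, hd, abs_of_neg hk0]
    have h1 := hlamle k0
    rw [abs_of_neg hk0] at h1
    linarith
  · push_neg at hneg
    have h1 : (fun k => |lam k|) = lam := funext fun k => abs_of_nonneg (hneg k)
    rw [h1, htr0]
    positivity
end
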